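/- Let d ≥ d_r ≥ 2 be real numbers and let w > 0 satisfy w·e^w = 1.27. Then the function c ↦ (d_r+1)·e^{1/c} − (2 − 1/d)·c·d_r + c²·d_r·(1 − e^{−1/c}) is strictly decreasing on the interval [1/w, ∞); that is, for all c₂ > c₁ ≥ 1/w, the value at c₂ is strictly less than the value at c₁. -/

import Mathlib

lemma exp_neg_lb' {t : ℝ} (h0 : 0 ≤ t) (h1 : t ≤ 1) :
    1 - t + t ^ 2 / 2 - (2 / 9) * t ^ 3 ≤ Real.exp (-t) := by
  have hx : |(-t)| ≤ 1 := by rw [abs_neg, abs_of_nonneg h0]; exact h1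
  have h := Real.exp_bound hx (n := 3) (by norm_num)
  have hsum : ∑ m ∈ Finset.range 3, (-t) ^ m / (m.factorial : ℝ) = 1 - t + t ^ 2 / 2 := by
    simp [Finset.sum_range_succ, Nat.factorial]
    ring
  rw [hsum, abs_neg, abs_of_nonneg h0] at h
  have h2 := (abs_sub_le_iff.1 h).2
  norm_num [Nat.factorial] at h2
  nlinarith [h2]

/-- The term `(d_r+1) e^{1/c} - (2 - 1/d) c d_r + c² d_r (1 - e^{-1/c})` is strictly
decreasing in `c` on `[1/W(1.27), ∞)`. -/
theorem case3_term_decreasing (d dr : ℝ) (hdr : 2 ≤ dr) (hd : dr ≤ d)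
    (w : ℝ) (hw : 0 < w) (hweq : w * Real.exp w = 1.27) :
    ∀ c₁ c₂ : ℝ, 1 / w ≤ c₁ → c₁ < c₂ →
      (dr + 1) * Real.exp (1 / c₂) - (2 - 1 / d) * c₂ * dr
          + c₂ ^ 2 * dr * (1 - Real.exp (-(1 / c₂)))
        < (dr + 1) * Real.exp (1 / c₁) - (2 - 1 / d) * c₁ * dr
          + c₁ ^ 2 * dr * (1 - Real.exp (-(1 / c₁))) := by
  have hw1 : w < 1 := by
    by_contra h
    push_neg at h
    have he : (2 : ℝ) ≤ Real.exp w := by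
      have := Real.add_one_le_exp w
      linarith
    have : (2 : ℝ) ≤ w * Real.exp w := by nlinarith
    rw [hweq] at this; norm_num at this
  have hinvw : 1 < 1 / w := by rw [lt_div_iff₀ hw]; linarith
  set f : ℝ → ℝ := fun c => (dr + 1) * Real.exp (1 / c) - (2 - 1 / d) * c * dr
      + c ^ 2 * dr * (1 - Real.exp (-(1 / c))) with hf
  have hderiv : ∀ c : ℝ, 0 < c → HasDerivAt f
      (-(dr + 1) * Real.exp (1 / c) / c ^ 2 - (2 - 1 / d) * dr
        + dr * (2 * c * (1 - Real.exp (-(1 / c))) - Real.exp (-(1 / c)))) c := by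
    intro c hc
    have hc0 : c ≠ 0 := ne_of_gt hc
    have h1 : HasDerivAt (fun x : ℝ => 1 / x) (-(1 / c ^ 2)) c := by
      simpa [one_div] using hasDerivAt_inv hc0
    have hA : HasDerivAt (fun x : ℝ => (dr + 1) * Real.exp (1 / x))
        ((dr + 1) * (Real.exp (1 / c) * -(1 / c ^ 2))) c := h1.exp.const_mul (dr + 1)
    have hB : HasDerivAt (fun x : ℝ => (2 - 1 / d) * x * dr) ((2 - 1 / d) * 1 * dr) c :=
      (((hasDerivAt_id c).const_mul (2 - 1 / d)).mul_const dr)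
    have hC1 : HasDerivAt (fun x : ℝ => 1 - Real.exp (-(1 / x)))
        (-(Real.exp (-(1 / c)) * - -(1 / c ^ 2))) c := (h1.neg.exp).const_sub 1
    have hC2 : HasDerivAt (fun x : ℝ => x ^ 2 * dr) (2 * c * dr) c := by
      simpa using (hasDerivAt_pow 2 c).mul_const dr
    have hC := hC2.mul hC1
    have h := (hA.sub hB).add hC
    refine h.congr_deriv ?_
    have hc2 : c ^ 2 * (1 / c ^ 2) = 1 := by field_simp
    linear_combination (-(dr * Real.exp (-(1 / c)))) * hc2
  have hanti : StrictAntiOn f (Set.Ici (1 / w)) := by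
    apply strictAntiOn_of_deriv_neg (convex_Ici _)
    · intro c hc
      have hcpos : 0 < c := lt_of_lt_of_le (by positivity) hc
      exact (hderiv c hcpos).continuousAt.continuousWithinAt
    · intro c hc
      rw [interior_Ici] at hc
      have hc1 : 1 < c := lt_trans hinvw hc
      have hcpos : 0 < c := by linarith
      rw [(hderiv c hcpos).deriv]
      set t := 1 / c with ht
      have ht0 : 0 < t := by positivity
      have ht1 : t < 1 := by rw [ht, div_lt_one hcpos]; linarith
      have hct : c * t = 1 := by rw [ht]; exact mul_one_div_cancel hcpos.ne'
      have hE := exp_neg_lb' ht0.le ht1.le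
      have hexp1 : 0 < Real.exp t := Real.exp_pos t
      have hpos : 0 < (dr + 1) * Real.exp t / c ^ 2 := by positivity
      have h1mE : 1 - Real.exp (-t) ≤ t - t ^ 2 / 2 + (2 / 9) * t ^ 3 := by linarith
      have h6 : 1 - t ≤ Real.exp (-t) := by linarith [Real.add_one_le_exp (-t)]
      have h5 : c * (1 - Real.exp (-t)) ≤ 1 - t / 2 + (2 / 9) * t ^ 2 := by
        have := mul_le_mul_of_nonneg_left h1mE hcpos.le
        nlinarith [hct]
      have key : 2 * c * (1 - Real.exp (-t)) - Real.exp (-t) ≤ 3 / 2 := by nlinarith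
      have hdle : 1 / d ≤ 1 / 2 := by
        apply one_div_le_one_div_of_le <;> linarith
      have hdrpos : (0 : ℝ) < dr := by linarith
      have h7 : dr * (2 * c * (1 - Real.exp (-t)) - Real.exp (-t)) ≤ dr * (3 / 2) :=
        mul_le_mul_of_nonneg_left key hdrpos.le
      have h8 : (1 / d) * dr ≤ (1 / 2) * dr := mul_le_mul_of_nonneg_right hdle hdrpos.le
      have hrw : -(dr + 1) * Real.exp t / c ^ 2 = -((dr + 1) * Real.exp t / c ^ 2) := by ring
      rw [hrw]
      linarith
  intro c₁ c₂ h1 h2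
  have := hanti (Set.mem_Ici.mpr h1) (Set.mem_Ici.mpr (le_trans h1 h2.le)) h2
  simpa [hf] using this
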